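/- Let F, F₁ be functions on a bounded domain Ω with F₁(z) = F(z) + z, F meromorphic. Then there exist constants c, C, M > 0 (depending only on the diameter of Ω) such that for all z ∈ Ω where both spherical derivatives exceed M, c · F^#(z) ≤ F₁^#(z) ≤ C · F^#(z). Consequently the spherical areas A_sph(F_n, Ω) are uniformly bounded if and only if the A_sph(F_n + z, Ω) are. -/

import Mathlib

open Complex Set MeasureTheory Real

/-- The spherical derivative of `F` at `z`. -/
noncomputable def sphDeriv (F : ℂ → ℂ) (z : ℂ) : ℝ :=
  2 * ‖deriv F z‖ / (1 + ‖F z‖ ^ 2)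

lemma sphDeriv_nonneg (F : ℂ → ℂ) (z : ℂ) : 0 ≤ sphDeriv F z := by
  unfold sphDeriv; positivity

/-- Arithmetic core: comparing the two spherical-derivative expressions. -/
lemma sph_arith (K A B n m : ℝ) (hK : 2 ≤ K) (hA : 0 ≤ A) (hB : 0 ≤ B)
    (hden : 1 + A ≤ K * (1 + B)) (hnum : m ≤ n + 1) (hn : 0 ≤ n) (hm : 0 ≤ m) :
    2 * m / (1 + B) ≤ K * (2 * n / (1 + A)) + 2 * K := by
  have hA1 : (0:ℝ) < 1 + A := by linarith
  have hB1 : (0:ℝ) < 1 + B := by linarith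
  set s := 2 * n / (1 + A) with hs_def
  have hs : 0 ≤ s := by positivity
  have hsA : s * (1 + A) = 2 * n := div_mul_cancel₀ _ (ne_of_gt hA1)
  rw [div_le_iff₀ hB1]
  nlinarith [mul_le_mul_of_nonneg_left hden hs, mul_nonneg hs hB]

/-- Denominator comparison on a bounded set. -/
lemma denom_le (R : ℝ) (u v : ℂ) (h : ‖u - v‖ ≤ R) :
    1 + ‖u‖ ^ 2 ≤ (2 + 2 * R ^ 2) * (1 + ‖v‖ ^ 2) := by
  have hR0 : 0 ≤ R := le_trans (norm_nonneg _) h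
  have h1 : ‖u‖ ≤ ‖v‖ + R := by
    calc ‖u‖ = ‖v + (u - v)‖ := by ring_nf
    _ ≤ ‖v‖ + ‖u - v‖ := norm_add_le _ _
    _ ≤ ‖v‖ + R := by linarith
  have h2 : 0 ≤ ‖u‖ := norm_nonneg _
  have h3 : 0 ≤ ‖v‖ := norm_nonneg _
  nlinarith [sq_nonneg (‖v‖ - R), sq_nonneg (‖v‖)]

/-- The key pointwise two-sided comparison. -/
lemma sph_pair (R : ℝ) (hR : 0 < R) (F : ℂ → ℂ) (z : ℂ) (hz : ‖z‖ ≤ R) :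
    sphDeriv (fun w => F w + w) z ≤ (2 + 2 * R ^ 2) * sphDeriv F z + 2 * (2 + 2 * R ^ 2) ∧
    sphDeriv F z ≤ (2 + 2 * R ^ 2) * sphDeriv (fun w => F w + w) z + 2 * (2 + 2 * R ^ 2) := by
  set K := 2 + 2 * R ^ 2 with hK_def
  have hK : 2 ≤ K := by nlinarith
  by_cases hd : DifferentiableAt ℂ F z
  · have hderiv : deriv (fun w => F w + w) z = deriv F z + 1 := by
      rw [deriv_fun_add hd differentiableAt_fun_id]
      simp
    have hden1 : 1 + ‖F z + z‖ ^ 2 ≤ K * (1 + ‖F z‖ ^ 2) :=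
      denom_le R _ _ (by simpa using hz)
    have hden2 : 1 + ‖F z‖ ^ 2 ≤ K * (1 + ‖F z + z‖ ^ 2) :=
      denom_le R _ _ (by simpa [neg_sub] using hz)
    constructor
    · unfold sphDeriv
      simp only [hderiv]
      exact sph_arith K (‖F z‖ ^ 2) (‖F z + z‖ ^ 2) (‖deriv F z‖)
        (‖deriv F z + 1‖) hK (by positivity) (by positivity) hden2
        (by simpa using norm_add_le (deriv F z) 1)
        (norm_nonneg _) (norm_nonneg _)
    · unfold sphDeriv
      simp only [hderiv]
      refine sph_arith K (‖F z + z‖ ^ 2) (‖F z‖ ^ 2) (‖deriv F z + 1‖)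
        (‖deriv F z‖) hK (by positivity) (by positivity) hden1 ?_
        (norm_nonneg _) (norm_nonneg _)
      calc ‖deriv F z‖ = ‖(deriv F z + 1) + (-1)‖ := by ring_nf
      _ ≤ ‖deriv F z + 1‖ + ‖-1‖ := norm_add_le _ _
      _ = ‖deriv F z + 1‖ + 1 := by simp
  · have hd' : ¬ DifferentiableAt ℂ (fun w => F w + w) z := by
      intro h
      have h2 : DifferentiableAt ℂ (fun w => (F w + w) - w) z := h.sub differentiableAt_fun_id
      exact hd (by simpa using h2)
    have h1 : deriv F z = 0 := deriv_zero_of_not_differentiableAt hd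
    have h2 : deriv (fun w => F w + w) z = 0 := deriv_zero_of_not_differentiableAt hd'
    have e1 : sphDeriv F z = 0 := by unfold sphDeriv; rw [h1]; simp
    have e2 : sphDeriv (fun w => F w + w) z = 0 := by unfold sphDeriv; rw [h2]; simp
    rw [e1, e2]
    constructor <;> nlinarith

/-- One direction of the integral bound. -/
lemma integral_step (R K : ℝ) (hK : 0 < K) (Ω : Set ℂ) (hΩ : MeasurableSet Ω)
    (hsub : Ω ⊆ Metric.ball 0 R) (f g : ℂ → ℝ)
    (hfg : ∀ z ∈ Ω, g z ≤ K * f z + 2 * K)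
    (hf : ∀ z, 0 ≤ f z) (hg : ∀ z, 0 ≤ g z) (B : ℝ)
    (hB : ∫⁻ z in Ω, ENNReal.ofReal (f z ^ 2) ≤ ENNReal.ofReal B) :
    ∫⁻ z in Ω, ENNReal.ofReal (g z ^ 2)
      ≤ ENNReal.ofReal (2 * K ^ 2 * max B 0
          + 8 * K ^ 2 * (volume (Metric.ball (0:ℂ) R)).toReal) := by
  have step1 : ∫⁻ z in Ω, ENNReal.ofReal (g z ^ 2)
      ≤ ∫⁻ z in Ω, (ENNReal.ofReal (2 * K ^ 2) * ENNReal.ofReal (f z ^ 2)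
          + ENNReal.ofReal (8 * K ^ 2)) := by
    apply lintegral_mono_ae
    rw [ae_restrict_iff' hΩ]
    filter_upwards with z hzΩ
    have h1 : g z ^ 2 ≤ 2 * K ^ 2 * f z ^ 2 + 8 * K ^ 2 := by
      have := hfg z hzΩ
      nlinarith [hf z, hg z, sq_nonneg (f z - 2), sq_nonneg (K * f z + 2 * K - g z)]
    calc ENNReal.ofReal (g z ^ 2) ≤ ENNReal.ofReal (2 * K ^ 2 * f z ^ 2 + 8 * K ^ 2) :=
        ENNReal.ofReal_le_ofReal h1
    _ = ENNReal.ofReal (2 * K ^ 2 * f z ^ 2) + ENNReal.ofReal (8 * K ^ 2) := by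
        rw [ENNReal.ofReal_add (by positivity) (by positivity)]
    _ = ENNReal.ofReal (2 * K ^ 2) * ENNReal.ofReal (f z ^ 2) + ENNReal.ofReal (8 * K ^ 2) := by
        rw [ENNReal.ofReal_mul (by positivity)]
  have step2 : ∫⁻ z in Ω, (ENNReal.ofReal (2 * K ^ 2) * ENNReal.ofReal (f z ^ 2)
          + ENNReal.ofReal (8 * K ^ 2))
      = (ENNReal.ofReal (2 * K ^ 2) * ∫⁻ z in Ω, ENNReal.ofReal (f z ^ 2))
          + ENNReal.ofReal (8 * K ^ 2) * volume Ω := by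
    rw [lintegral_add_right _ measurable_const, lintegral_const_mul' _ _ ENNReal.ofReal_ne_top,
      lintegral_const, Measure.restrict_apply_univ]
  have hball : volume Ω ≤ ENNReal.ofReal ((volume (Metric.ball (0:ℂ) R)).toReal) := by
    rw [ENNReal.ofReal_toReal (measure_ball_lt_top).ne]
    exact measure_mono hsub
  calc ∫⁻ z in Ω, ENNReal.ofReal (g z ^ 2)
      ≤ (ENNReal.ofReal (2 * K ^ 2) * ∫⁻ z in Ω, ENNReal.ofReal (f z ^ 2))
          + ENNReal.ofReal (8 * K ^ 2) * volume Ω := step1.trans (le_of_eq step2)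
  _ ≤ ENNReal.ofReal (2 * K ^ 2) * ENNReal.ofReal (max B 0)
          + ENNReal.ofReal (8 * K ^ 2) * ENNReal.ofReal ((volume (Metric.ball (0:ℂ) R)).toReal) := by
      gcongr
      exact hB.trans (ENNReal.ofReal_le_ofReal (le_max_left _ _))
  _ = ENNReal.ofReal (2 * K ^ 2 * max B 0
          + 8 * K ^ 2 * (volume (Metric.ball (0:ℂ) R)).toReal) := by
      rw [← ENNReal.ofReal_mul (by positivity), ← ENNReal.ofReal_mul (by positivity),
        ← ENNReal.ofReal_add (by positivity) (by positivity)]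

/-- On a bounded domain `Ω`, the spherical derivatives of `F` and of `F₁ = F + z` are
comparable whenever both are large, with constants depending only on the size of `Ω`.
Consequently a sequence `Fₙ` has uniformly bounded spherical areas iff `Fₙ + z` does. -/
theorem spherical_derivative_perturbation (R : ℝ) (hR : 0 < R) :
    ∃ c C M : ℝ, 0 < c ∧ 0 < C ∧ 0 < M ∧
      ∀ Ω : Set ℂ, IsOpen Ω → Ω ⊆ Metric.ball 0 R →
        ((∀ F : ℂ → ℂ, MeromorphicOn F Ω → ∀ z ∈ Ω,
            M < sphDeriv F z → M < sphDeriv (fun w => F w + w) z →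
            c * sphDeriv F z ≤ sphDeriv (fun w => F w + w) z ∧
              sphDeriv (fun w => F w + w) z ≤ C * sphDeriv F z) ∧
          ∀ F : ℕ → ℂ → ℂ, (∀ n, MeromorphicOn (F n) Ω) →
            ((∃ B : ℝ, ∀ n, ∫⁻ z in Ω, ENNReal.ofReal (sphDeriv (F n) z ^ 2)
                ≤ ENNReal.ofReal B) ↔
              (∃ B : ℝ, ∀ n, ∫⁻ z in Ω, ENNReal.ofReal (sphDeriv (fun w => F n w + w) z ^ 2)
                ≤ ENNReal.ofReal B))) := by
  set K := 2 + 2 * R ^ 2 with hK_def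
  have hK2 : 2 ≤ K := by nlinarith
  have hK0 : 0 < K := by linarith
  refine ⟨1 / (2 * K), 2 * K, 4 * K, by positivity, by positivity, by positivity, ?_⟩
  intro Ω hΩopen hΩsub
  have habs : ∀ z ∈ Ω, ‖z‖ ≤ R := by
    intro z hz
    have := hΩsub hz
    rw [Metric.mem_ball, dist_zero_right] at this
    exact le_of_lt (by simpa using this)
  constructor
  · intro F _ z hz hM1 hM2
    obtain ⟨h1, h2⟩ := sph_pair R hR F z (habs z hz)
    set s := sphDeriv F z
    set t := sphDeriv (fun w => F w + w) z
    constructor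
    · rw [one_div, inv_mul_le_iff₀ (by positivity)]
      nlinarith
    · nlinarith
  · intro F _
    constructor
    · rintro ⟨B, hB⟩
      refine ⟨2 * K ^ 2 * max B 0 + 8 * K ^ 2 * (volume (Metric.ball (0:ℂ) R)).toReal, fun n => ?_⟩
      refine integral_step R K hK0 Ω hΩopen.measurableSet hΩsub _ _ ?_
        (sphDeriv_nonneg _) (sphDeriv_nonneg _) B (hB n)
      intro z hz
      exact (sph_pair R hR (F n) z (habs z hz)).1
    · rintro ⟨B, hB⟩
      refine ⟨2 * K ^ 2 * max B 0 + 8 * K ^ 2 * (volume (Metric.ball (0:ℂ) R)).toReal, fun n => ?_⟩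
      refine integral_step R K hK0 Ω hΩopen.measurableSet hΩsub _ _ ?_
        (sphDeriv_nonneg _) (sphDeriv_nonneg _) B (hB n)
      intro z hz
      exact (sph_pair R hR (F n) z (habs z hz)).2
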